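/- Let n be an even positive integer and V a real n×n circulant symmetric positive definite matrix with eigenvalues Λ_k = ∑_{l=0}^{n−1} v_l e^{2πikl/n} (all real and positive). Let P = diag((−1)^k)_{k=0}^{n−1} and Q = V^{−1/2} P V^{1/2} P. Then the characteristic polynomial of Q factors as det(λI − Q) = ∏_{k=0}^{n/2−1} (λ − (Λ_{k+n/2}/Λ_k)^{1/2}) (λ − (Λ_k/Λ_{k+n/2})^{1/2}); that is, the eigenvalues of Q are exactly the numbers (Λ_{k+n/2}/Λ_k)^{±1/2} for k = 0,…,n/2 − 1, counted with multiplicity. -/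

import Mathlib

open Matrix Polynomial

/-- Real matrix power `M ^ p` defined via the continuous functional calculus
(spectral calculus). -/
noncomputable def mpow {k : ℕ} (M : Matrix (Fin k) (Fin k) ℝ) (p : ℝ) :
    Matrix (Fin k) (Fin k) ℝ :=
  cfc (fun x : ℝ => x ^ p) M

section Aux

variable {ι : Type*} [Fintype ι] [DecidableEq ι] {R : Type*} [CommRing R]

lemma my_charpoly_conj_inv (F M : Matrix ι ι R) [Invertible F] :
    (F * M * ⅟F).charpoly = M.charpoly := by
  have hC : ∀ (A B : Matrix ι ι R), (A * B).map (C : R →+* R[X]) =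
      A.map C * B.map C := fun A B => by
    simpa using (RingHom.mapMatrix (C : R →+* R[X])).map_mul A B
  have h1 : (F.map (C : R →+* R[X])) * ((⅟F).map C) = 1 := by
    rw [← hC, mul_invOf_self]; simp
  have hcomm : F.map (C : R →+* R[X]) * Matrix.scalar ι (X : R[X])
      = Matrix.scalar ι (X : R[X]) * F.map C :=
    (Matrix.scalar_commute X (fun r => Commute.all _ _) (F.map C)).eq.symm
  have hcm : F.map (C : R →+* R[X]) * charmatrix M * (⅟F).map C
      = charmatrix (F * M * ⅟F) := by
    unfold charmatrix
    rw [RingHom.mapMatrix_apply, RingHom.mapMatrix_apply, mul_sub, sub_mul, hcomm,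
      mul_assoc (Matrix.scalar ι (X : R[X])), h1, mul_one, hC, hC, mul_assoc]
  rw [Matrix.charpoly, ← hcm, Matrix.det_mul, Matrix.det_mul,
    mul_comm ((F.map (C : R →+* R[X])).det), mul_assoc, ← Matrix.det_mul, h1]
  simp [Matrix.charpoly]

lemma my_pow_congr_mod {G : Type*} [Monoid G] (ζ : G) (n : ℕ) (hζ : ζ ^ n = 1)
    {a b : ℕ} (h : a % n = b % n) : ζ ^ a = ζ ^ b := by
  have key : ∀ c : ℕ, ζ ^ c = ζ ^ (c % n) := by
    intro c
    conv_lhs => rw [← Nat.div_add_mod c n]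
    rw [pow_add, pow_mul, hζ, one_pow, one_mul]
  rw [key a, key b, h]

lemma my_aeval_mul_diag {M F : Matrix ι ι R} {d : ι → R}
    (h : M * F = F * diagonal d) (q : R[X]) :
    aeval M q * F = F * diagonal fun k => q.eval (d k) := by
  have hpow : ∀ i : ℕ, M ^ i * F = F * diagonal fun k => d k ^ i := by
    intro i
    induction i with
    | zero => simp [Matrix.diagonal_one]
    | succ i ih =>
      rw [pow_succ, mul_assoc, h, ← mul_assoc, ih, mul_assoc,
        Matrix.diagonal_mul_diagonal]
      congr 1
      rw [funext fun k => pow_succ (d k) i]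
  induction q using Polynomial.induction_on' with
  | add p r hp hr =>
    rw [map_add, add_mul, hp, hr, ← mul_add, Matrix.diagonal_add]
    congr 1
    ext k
    simp
  | monomial i c =>
    rw [Polynomial.aeval_monomial, Algebra.algebraMap_eq_smul_one, smul_mul_assoc,
      one_mul, smul_mul_assoc, hpow i, ← mul_smul_comm]
    congr 1
    ext j l
    by_cases hjl : j = l <;>
      simp [Matrix.diagonal_apply, hjl, Polynomial.eval_monomial]

lemma my_conj_aeval {P M : Matrix ι ι R} (hP : P * P = 1) (q : R[X]) :
    P * aeval M q * P = aeval (P * M * P) q := by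
  have hpow : ∀ i : ℕ, (P * M * P) ^ i = P * M ^ i * P := by
    intro i
    induction i with
    | zero => simpa using hP.symm
    | succ i ih =>
      rw [pow_succ, ih, pow_succ]
      simp only [mul_assoc]
      rw [← mul_assoc P P (M * P), hP, one_mul]
  induction q using Polynomial.induction_on' with
  | add p r hp hr => rw [map_add, map_add, mul_add, add_mul, hp, hr]
  | monomial i c =>
    rw [Polynomial.aeval_monomial, Polynomial.aeval_monomial, hpow i]
    simp only [Algebra.algebraMap_eq_smul_one, smul_mul_assoc, mul_smul_comm, one_mul]

lemma my_map_aeval {S : Type*} [CommRing S] (f : R →+* S) (M : Matrix ι ι R) (q : R[X]) :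
    (aeval M q).map f = aeval (M.map f) (q.map f) := by
  have h1 := Polynomial.hom_eval₂ q (algebraMap R (Matrix ι ι R)) (f.mapMatrix) M
  have h2 : (f.mapMatrix.comp (algebraMap R (Matrix ι ι R)))
      = (algebraMap S (Matrix ι ι S)).comp f := by
    refine RingHom.ext fun a => ?_
    ext i j
    simp [Matrix.algebraMap_matrix_apply, apply_ite f]
  rw [Polynomial.aeval_def, ← RingHom.mapMatrix_apply, h1, Polynomial.aeval_def,
    Polynomial.eval₂_map, h2, RingHom.mapMatrix_apply]

lemma my_circulant_mul {n : ℕ} [NeZero n] {K : Type*} [CommRing K] (ζ : K)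
    (hζ : ζ ^ n = 1) (u : Fin n → K) (hu : ∀ l, u (-l) = u l) :
    circulant u * (Matrix.of fun j k : Fin n => ζ ^ ((j : ℕ) * (k : ℕ))) =
      (Matrix.of fun j k : Fin n => ζ ^ ((j : ℕ) * (k : ℕ))) *
        diagonal (fun k : Fin n => ∑ l : Fin n, u l * ζ ^ ((l : ℕ) * (k : ℕ))) := by
  ext j k
  rw [Matrix.mul_diagonal, Matrix.mul_apply]
  simp only [Matrix.circulant_apply, Matrix.of_apply]
  have lhs2 : ∑ l : Fin n, u (j - l) * ζ ^ ((l : ℕ) * (k : ℕ))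
      = ∑ d : Fin n, u d * ζ ^ (((j - d : Fin n) : ℕ) * (k : ℕ)) := by
    refine Fintype.sum_equiv (Equiv.subLeft j) _ _ fun d => ?_
    simp [Equiv.subLeft, sub_sub_cancel]
  have rhs2 : ζ ^ ((j : ℕ) * (k : ℕ)) * ∑ l : Fin n, u l * ζ ^ ((l : ℕ) * (k : ℕ))
      = ∑ d : Fin n, u d * ζ ^ (((j : ℕ) + ((-d : Fin n) : ℕ)) * (k : ℕ)) := by
    rw [Finset.mul_sum]
    refine Fintype.sum_equiv (Equiv.neg (Fin n)) _ _ fun d => ?_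
    simp only [Equiv.neg_apply, hu, neg_neg]
    rw [add_mul, pow_add]
    ring
  rw [lhs2, rhs2]
  refine Finset.sum_congr rfl fun d _ => ?_
  congr 1
  refine my_pow_congr_mod ζ n hζ ?_
  rw [sub_eq_add_neg j d, Fin.add_def]
  exact Nat.ModEq.mul_right (k : ℕ) (Nat.mod_modEq _ n)

end Aux

/-- For `n = m + m` even positive, `V` circulant symmetric
positive definite with Fourier eigenvalues `Λ_k = ∑_l v_l e^{2πikl/n}`,
`P = diag((-1)^k)` and `Q = V^{-1/2} P V^{1/2} P`, the characteristic
polynomial of `Q` factors as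
`det(λI - Q) = ∏_{k<n/2} (λ - √(Λ_{k+n/2}/Λ_k))(λ - √(Λ_k/Λ_{k+n/2}))`. -/
theorem charpoly_Q_even_odd_bisection
    (m : ℕ) (hm : 0 < m)
    (v : Fin (m + m) → ℝ) (hv : ∀ l, v (-l) = v l)
    (V : Matrix (Fin (m + m)) (Fin (m + m)) ℝ) (hV : V = Matrix.circulant v)
    (hVpd : V.PosDef)
    (Λ : Fin (m + m) → ℝ)
    (hΛ : ∀ k : Fin (m + m), (Λ k : ℂ) =
      ∑ l : Fin (m + m), (v l : ℂ) *
        Complex.exp (2 * Real.pi * Complex.I * (k : ℕ) * (l : ℕ) / (m + m : ℕ)))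
    (P : Matrix (Fin (m + m)) (Fin (m + m)) ℝ)
    (hP : P = Matrix.diagonal (fun k : Fin (m + m) => (-1 : ℝ) ^ (k : ℕ)))
    (Q : Matrix (Fin (m + m)) (Fin (m + m)) ℝ)
    (hQ : Q = mpow V (-(1/2)) * P * mpow V (1/2) * P) :
    Q.charpoly = ∏ k : Fin m,
      ((X - C (Real.sqrt (Λ (Fin.natAdd m k) / Λ (Fin.castAdd m k))))
        * (X - C (Real.sqrt (Λ (Fin.castAdd m k) / Λ (Fin.natAdd m k))))) := by
  classical
  haveI : NeZero (m + m) := ⟨by omega⟩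
  set ζ : ℂ := Complex.exp (2 * Real.pi * Complex.I / (m + m : ℕ)) with hζdef
  have hprim : IsPrimitiveRoot ζ (m + m) := Complex.isPrimitiveRoot_exp _ (by omega)
  have hζ1 : ζ ^ (m + m) = 1 := hprim.pow_eq_one
  set F : Matrix (Fin (m + m)) (Fin (m + m)) ℂ :=
    Matrix.of (fun j k : Fin (m + m) => ζ ^ ((j : ℕ) * (k : ℕ))) with hFdef
  have hdetF : F.det ≠ 0 := by
    have hFvdm : F = (Matrix.vandermonde fun j : Fin (m + m) => ζ ^ (j : ℕ)) := by
      ext j k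
      simp [Matrix.vandermonde_apply, ← pow_mul, hFdef]
    rw [hFvdm, Matrix.det_vandermonde_ne_zero_iff]
    intro a b hab
    exact Fin.ext (hprim.pow_inj a.isLt b.isLt hab)
  haveI : Invertible F := F.invertibleOfIsUnitDet (isUnit_iff_ne_zero.mpr hdetF)
  have hne : ((m + m : ℕ) : ℂ) ≠ 0 := Nat.cast_ne_zero.mpr (by omega)
  have hΛc : ∀ k : Fin (m + m), (Λ k : ℂ)
      = ∑ l : Fin (m + m), (v l : ℂ) * ζ ^ ((l : ℕ) * (k : ℕ)) := by
    intro k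
    rw [hΛ k]
    refine Finset.sum_congr rfl fun l _ => ?_
    congr 1
    rw [hζdef, ← Complex.exp_nat_mul]
    congr 1
    field_simp
    push_cast
    ring
  -- Fourier diagonalization of V
  have hVF : V.map Complex.ofRealHom * F = F * diagonal (fun k => (Λ k : ℂ)) := by
    have hmapc : V.map Complex.ofRealHom = circulant (fun l => (v l : ℂ)) := by
      rw [hV, Matrix.map_circulant]
      rfl
    have := my_circulant_mul ζ hζ1 (fun l => (v l : ℂ))
      (fun l => by simp [hv l])
    rw [hmapc, hFdef]
    rw [this]
    have hdg : (fun k : Fin (m + m) => ∑ l : Fin (m + m), ((v l : ℂ)) * ζ ^ ((l : ℕ) * (k : ℕ)))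
        = fun k => ((Λ k : ℂ)) := funext fun k => (hΛc k).symm
    exact congrArg (fun dg => (Matrix.of (fun j k : Fin (m + m) => ζ ^ ((j : ℕ) * (k : ℕ)))) * diagonal dg) hdg
  -- determinant formula
  have hdet : ∀ a : ℝ, ((Matrix.det (a • (1 : Matrix (Fin (m + m)) (Fin (m + m)) ℝ) - V) : ℝ) : ℂ)
      = ∏ k : Fin (m + m), ((a : ℂ) - (Λ k : ℂ)) := by
    intro a
    have hmap : (a • (1 : Matrix (Fin (m + m)) (Fin (m + m)) ℝ) - V).map Complex.ofRealHom
        = (a : ℂ) • 1 - V.map Complex.ofRealHom := by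
      ext i j
      by_cases hij : i = j <;>
        simp [Matrix.map_apply, Matrix.one_apply, hij]
    have key : ((a : ℂ) • 1 - V.map Complex.ofRealHom) * F
        = F * diagonal (fun k => (a : ℂ) - (Λ k : ℂ)) := by
      rw [sub_mul, smul_mul_assoc, one_mul, hVF]
      have : diagonal (fun k : Fin (m + m) => (a : ℂ) - (Λ k : ℂ))
          = diagonal (fun _ => (a : ℂ)) - diagonal (fun k => (Λ k : ℂ)) := by
        rw [Matrix.diagonal_sub]
      rw [this, Matrix.mul_sub]
      congr 1
      have hsm : (diagonal fun _ : Fin (m + m) => (a : ℂ)) = (a : ℂ) • 1 := by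
        ext i j
        by_cases hij : i = j <;> simp [hij]
      rw [hsm, mul_smul_comm, mul_one]
    have hdd := congrArg Matrix.det key
    rw [Matrix.det_mul, Matrix.det_mul, Matrix.det_diagonal] at hdd
    have h2 : Matrix.det ((a : ℂ) • 1 - V.map Complex.ofRealHom)
        = ∏ k : Fin (m + m), ((a : ℂ) - (Λ k : ℂ)) :=
      mul_right_cancel₀ hdetF (hdd.trans (mul_comm _ _))
    rw [← h2, ← hmap]
    simpa using RingHom.map_det Complex.ofRealHom (a • 1 - V)
  -- positivity of the eigenvalues
  have hΛpos : ∀ k, 0 < Λ k := by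
    intro k
    have hdet0 : Matrix.det ((Λ k) • (1 : Matrix (Fin (m + m)) (Fin (m + m)) ℝ) - V) = 0 := by
      have h := hdet (Λ k)
      have hz : (∏ j : Fin (m + m), (((Λ k : ℝ) : ℂ) - (Λ j : ℂ))) = 0 :=
        Finset.prod_eq_zero (Finset.mem_univ k) (by ring)
      rw [hz] at h
      exact_mod_cast h
    obtain ⟨x, hx0, hx⟩ := Matrix.exists_mulVec_eq_zero_iff.mpr hdet0
    have hVx : V.mulVec x = Λ k • x := by
      rw [Matrix.sub_mulVec, sub_eq_zero] at hx
      rw [← hx, Matrix.smul_mulVec, Matrix.one_mulVec]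
    have hq := hVpd.dotProduct_mulVec_pos hx0
    rw [hVx] at hq
    have hdot : star x ⬝ᵥ (Λ k • x) = Λ k * (x ⬝ᵥ x) := by
      simp [dotProduct_smul, star_trivial]
    rw [hdot] at hq
    have hxx : 0 < x ⬝ᵥ x := by
      rcases lt_or_eq_of_le (Finset.sum_nonneg fun i _ => mul_self_nonneg (x i)) with h | h
      · exact h
      · exact absurd (dotProduct_self_eq_zero.mp h.symm) hx0
    nlinarith
  -- the spectrum of V is contained in the range of Λ
  have hspec : spectrum ℝ V ⊆ Set.range Λ := by
    intro a ha
    by_contra hna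
    rw [spectrum.mem_iff] at ha
    apply ha
    rw [Algebra.algebraMap_eq_smul_one]
    rw [Matrix.isUnit_iff_isUnit_det]
    refine isUnit_iff_ne_zero.mpr fun h0 => ?_
    have := hdet a
    rw [h0] at this
    have : (0 : ℂ) = ∏ k : Fin (m + m), ((a : ℂ) - (Λ k : ℂ)) := by exact_mod_cast this
    rcases Finset.prod_eq_zero_iff.mp this.symm with ⟨k, -, hk⟩
    exact hna ⟨k, by exact_mod_cast (sub_eq_zero.mp hk).symm⟩
  -- Lagrange interpolation polynomials realizing the real powers on the spectrum
  have hsa : IsSelfAdjoint V := hVpd.isHermitian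
  set s : Finset ℝ := Finset.image Λ Finset.univ with hs
  have hmem : ∀ k, Λ k ∈ s := fun k => Finset.mem_image_of_mem _ (Finset.mem_univ k)
  have hinj : Set.InjOn (id : ℝ → ℝ) ↑s := fun a _ b _ h => h
  have hmp : ∀ p : ℝ, mpow V p = aeval V (Lagrange.interpolate s id (fun x => x ^ p)) := by
    intro p
    have h1 : cfc (fun x : ℝ => x ^ p) V
        = cfc (fun x : ℝ => (Lagrange.interpolate s id (fun x => x ^ p)).eval x) V := by
      apply cfc_congr
      intro x hx
      obtain ⟨k, rfl⟩ := hspec hx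
      simpa using (Lagrange.eval_interpolate_at_node (fun x : ℝ => x ^ p) hinj (hmem k)).symm
    rw [mpow, h1]
    exact cfc_polynomial _ V
  -- parity helpers
  have hpar : ∀ a : ℕ, (a % (m + m)) % 2 = a % 2 := by
    intro a
    have h := Nat.div_add_mod a (m + m)
    set r := a % (m + m) with hr
    set qq := a / (m + m) with hq
    set t := m * qq with htdef
    have ht : (m + m) * qq + r = a := h
    have ht2 : t + t + r = a := by rw [← ht, htdef]; ring
    omega
  have hP2 : P * P = 1 := by
    rw [hP, Matrix.diagonal_mul_diagonal]
    have h1 : (fun k : Fin (m + m) => (-1 : ℝ) ^ (k : ℕ) * (-1) ^ (k : ℕ))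
        = fun _ => (1 : ℝ) := by
      funext k
      rw [← pow_add]
      exact Even.neg_one_pow ⟨(k : ℕ), rfl⟩
    rw [h1, Matrix.diagonal_one]
  have hsign : ∀ i j : Fin (m + m), ((-1 : ℝ) ^ (i : ℕ)) * ((-1 : ℝ) ^ (j : ℕ))
      = (-1 : ℝ) ^ ((i - j : Fin (m + m)) : ℕ) := by
    intro i j
    rw [← pow_add]
    refine my_pow_congr_mod (-1 : ℝ) 2 (by norm_num) ?_
    have hsub : ((i - j : Fin (m + m)) : ℕ) = ((m + m - (j : ℕ)) + (i : ℕ)) % (m + m) := by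
      rw [Fin.sub_def]
    rw [hsub, hpar]
    have hj : (j : ℕ) < m + m := j.isLt
    omega
  have hPVP : P * V * P = circulant (fun l : Fin (m + m) => (-1 : ℝ) ^ (l : ℕ) * v l) := by
    rw [hP, hV]
    ext i j
    rw [Matrix.mul_diagonal, Matrix.diagonal_mul, Matrix.circulant_apply, Matrix.circulant_apply]
    linear_combination (v (i - j)) * hsign i j
  -- ζ ^ m = -1
  have hζm : ζ ^ m = -1 := by
    have harg : ((m : ℕ) : ℂ) * (2 * (Real.pi : ℂ) * Complex.I / ((m + m : ℕ) : ℂ))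
        = (Real.pi : ℂ) * Complex.I := by
      have hmne : ((m : ℕ) : ℂ) ≠ 0 := Nat.cast_ne_zero.mpr (by omega)
      have hcast : ((m + m : ℕ) : ℂ) = 2 * ((m : ℕ) : ℂ) := by push_cast; ring
      rw [hcast]
      field_simp
    rw [hζdef, ← Complex.exp_nat_mul, harg, Complex.exp_pi_mul_I]
  have hnegpar : ∀ l : Fin (m + m), ((-l : Fin (m + m)) : ℕ) % 2 = (l : ℕ) % 2 := by
    intro l
    have hneg : ((-l : Fin (m + m)) : ℕ) = (m + m - (l : ℕ)) % (m + m) := by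
      rw [Fin.neg_def]
    rw [hneg, hpar]
    have := l.isLt
    omega
  -- Fourier action of P * V * P
  set em : Fin (m + m) := ⟨m, by omega⟩ with hem
  have hPVPF : (P * V * P).map Complex.ofRealHom * F
      = F * diagonal (fun k => (Λ (k + em) : ℂ)) := by
    have hmapc : (P * V * P).map Complex.ofRealHom
        = circulant (fun l : Fin (m + m) => ((((-1 : ℝ) ^ (l : ℕ) * v l : ℝ)) : ℂ)) := by
      rw [hPVP, Matrix.map_circulant]
      rfl
    have hu : ∀ l : Fin (m + m),
        ((((-1 : ℝ) ^ (((-l : Fin (m + m))) : ℕ) * v (-l) : ℝ)) : ℂ)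
          = ((((-1 : ℝ) ^ (l : ℕ) * v l : ℝ)) : ℂ) := by
      intro l
      rw [hv l, my_pow_congr_mod (-1 : ℝ) 2 (by norm_num) (hnegpar l)]
    rw [hmapc, hFdef, my_circulant_mul ζ hζ1 _ hu]
    have hdg : (fun k : Fin (m + m) => ∑ l : Fin (m + m),
          ((((-1 : ℝ) ^ (l : ℕ) * v l : ℝ)) : ℂ) * ζ ^ ((l : ℕ) * (k : ℕ)))
        = fun k => ((Λ (k + em) : ℝ) : ℂ) := by
      funext k
      rw [hΛc (k + em)]
      refine Finset.sum_congr rfl fun l _ => ?_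
      have hneg1 : (((((-1 : ℝ)) ^ (l : ℕ) : ℝ)) : ℂ) = ζ ^ (m * (l : ℕ)) := by
        push_cast
        rw [← hζm, ← pow_mul]
      push_cast
      rw [show ((-1 : ℂ)) ^ (l : ℕ) = ζ ^ (m * (l : ℕ)) by rw [← hζm, ← pow_mul]]
      have hexp : ζ ^ (m * (l : ℕ)) * ζ ^ ((l : ℕ) * (k : ℕ))
          = ζ ^ ((l : ℕ) * ((k + em : Fin (m + m)) : ℕ)) := by
        rw [← pow_add]
        refine my_pow_congr_mod ζ (m + m) hζ1 ?_
        have hval : ((k + em : Fin (m + m)) : ℕ) = ((k : ℕ) + m) % (m + m) := by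
          rw [Fin.add_def]
        rw [hval]
        have h1 : (l : ℕ) * (((k : ℕ) + m) % (m + m)) ≡ (l : ℕ) * ((k : ℕ) + m) [MOD m + m] :=
          Nat.ModEq.mul_left _ (Nat.mod_modEq _ _)
        have h2 : m * (l : ℕ) + (l : ℕ) * (k : ℕ) = (l : ℕ) * ((k : ℕ) + m) := by ring
        rw [h2]
        exact h1.symm
      linear_combination ((v l : ℂ)) * hexp
    exact congrArg (fun dg =>
      (Matrix.of (fun j k : Fin (m + m) => ζ ^ ((j : ℕ) * (k : ℕ)))) * diagonal dg) hdg
  -- diagonalization of the complexification of Q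
  have hQc : Q.map Complex.ofRealHom * F = F * diagonal
      (fun k => ((Λ k ^ (-(1/2) : ℝ) * Λ (k + em) ^ ((1/2) : ℝ) : ℝ) : ℂ)) := by
    set qm : ℝ[X] := Lagrange.interpolate s id (fun x => x ^ (-(1/2) : ℝ)) with hqm
    set qp : ℝ[X] := Lagrange.interpolate s id (fun x => x ^ ((1/2) : ℝ)) with hqp
    have hQ' : Q = aeval V qm * (P * aeval V qp * P) := by
      rw [hQ, hmp (-(1/2) : ℝ), hmp ((1/2) : ℝ)]
      simp only [mul_assoc, hqm, hqp]
    have hQmap : Q.map Complex.ofRealHom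
        = aeval (V.map Complex.ofRealHom) (qm.map Complex.ofRealHom)
          * aeval ((P * V * P).map Complex.ofRealHom) (qp.map Complex.ofRealHom) := by
      rw [hQ', my_conj_aeval hP2 qp, Matrix.map_mul, my_map_aeval, my_map_aeval]
    have hA := my_aeval_mul_diag hVF (qm.map Complex.ofRealHom)
    have hB := my_aeval_mul_diag hPVPF (qp.map Complex.ofRealHom)
    rw [hQmap, mul_assoc, hB, ← mul_assoc, hA, mul_assoc, Matrix.diagonal_mul_diagonal]
    refine congrArg (fun dg =>
      (Matrix.of (fun j k : Fin (m + m) => ζ ^ ((j : ℕ) * (k : ℕ)))) * diagonal dg)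
      (funext fun k => ?_)
    have he1 : (qm.map (Complex.ofRealHom : ℝ →+* ℂ)).eval ((Λ k : ℂ))
        = ((Λ k ^ (-(1/2) : ℝ) : ℝ) : ℂ) := by
      rw [Polynomial.eval_map,
        show ((Λ k : ℝ) : ℂ) = Complex.ofRealHom (Λ k) from rfl,
        Polynomial.eval₂_at_apply]
      have h2 := Lagrange.eval_interpolate_at_node (fun x : ℝ => x ^ (-(1/2) : ℝ)) hinj (hmem k)
      simp only [id] at h2
      rw [hqm, h2]
      rfl
    have he2 : (qp.map (Complex.ofRealHom : ℝ →+* ℂ)).eval ((Λ (k + em) : ℂ))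
        = ((Λ (k + em) ^ ((1/2) : ℝ) : ℝ) : ℂ) := by
      rw [Polynomial.eval_map,
        show ((Λ (k + em) : ℝ) : ℂ) = Complex.ofRealHom (Λ (k + em)) from rfl,
        Polynomial.eval₂_at_apply]
      have h2 := Lagrange.eval_interpolate_at_node (fun x : ℝ => x ^ ((1/2) : ℝ)) hinj (hmem (k + em))
      simp only [id] at h2
      rw [hqp, h2]
      rfl
    rw [he1, he2]
    push_cast
    ring
  -- conclude via the characteristic polynomial of the diagonal matrix
  set dd : Fin (m + m) → ℂ :=
    fun k => ((Λ k ^ (-(1/2) : ℝ) * Λ (k + em) ^ ((1/2) : ℝ) : ℝ) : ℂ) with hdd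
  have hQdiag : Q.map Complex.ofRealHom = F * diagonal dd * ⅟F := by
    rw [← hQc, mul_assoc, mul_invOf_self, mul_one]
  have hcp : Q.charpoly.map Complex.ofRealHom = ∏ k : Fin (m + m), (X - C (dd k)) := by
    rw [← Matrix.charpoly_map, hQdiag, my_charpoly_conj_inv,
      Matrix.charpoly_of_upperTriangular _ (Matrix.blockTriangular_diagonal dd)]
    refine Finset.prod_congr rfl fun k _ => ?_
    rw [Matrix.diagonal_apply_eq]
  -- index arithmetic
  have hcast_add : ∀ k : Fin m, (Fin.castAdd m k + em) = Fin.natAdd m k := by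
    intro k
    apply Fin.ext
    rw [Fin.add_def]
    simp only [Fin.castAdd, Fin.natAdd, Fin.castLE, hem]
    have := k.isLt
    rw [Nat.mod_eq_of_lt (by omega)]
    omega
  have hnat_add : ∀ k : Fin m, (Fin.natAdd m k + em) = Fin.castAdd m k := by
    intro k
    apply Fin.ext
    rw [Fin.add_def]
    simp only [Fin.castAdd, Fin.natAdd, Fin.castLE, hem]
    have := k.isLt
    have h2 : m + (k : ℕ) + m = (k : ℕ) + (m + m) := by ring
    rw [h2, Nat.add_mod_right, Nat.mod_eq_of_lt (by omega)]
  have hrpow : ∀ a b : ℝ, 0 < a → 0 < b →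
      a ^ (-(1/2) : ℝ) * b ^ ((1/2) : ℝ) = Real.sqrt (b / a) := by
    intro a b ha hb
    rw [Real.sqrt_div hb.le a, Real.sqrt_eq_rpow, Real.sqrt_eq_rpow,
      Real.rpow_neg ha.le, inv_mul_eq_div]
  -- final computation
  have hinjmap : Function.Injective (Polynomial.map (Complex.ofRealHom : ℝ →+* ℂ)) :=
    Polynomial.map_injective _ Complex.ofReal_injective
  apply hinjmap
  rw [hcp, ← Polynomial.coe_mapRingHom, map_prod]
  rw [Fin.prod_univ_add (f := fun k : Fin (m + m) => (X - C (dd k)))]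
  rw [show (∏ k : Fin m,
      ((Polynomial.mapRingHom (Complex.ofRealHom : ℝ →+* ℂ))
        ((X - C (Real.sqrt (Λ (Fin.natAdd m k) / Λ (Fin.castAdd m k))))
          * (X - C (Real.sqrt (Λ (Fin.castAdd m k) / Λ (Fin.natAdd m k)))))))
      = ∏ k : Fin m,
      ((X - C ((Real.sqrt (Λ (Fin.natAdd m k) / Λ (Fin.castAdd m k)) : ℝ) : ℂ))
        * (X - C ((Real.sqrt (Λ (Fin.castAdd m k) / Λ (Fin.natAdd m k)) : ℝ) : ℂ)))
    from Finset.prod_congr rfl fun k _ => by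
      simp [Polynomial.map_ofNat]]
  rw [Finset.prod_mul_distrib]
  have hd1 : ∀ k : Fin m, dd (Fin.castAdd m k)
      = ((Real.sqrt (Λ (Fin.natAdd m k) / Λ (Fin.castAdd m k)) : ℝ) : ℂ) := by
    intro k
    show ((Λ (Fin.castAdd m k) ^ (-(1/2) : ℝ)
      * Λ ((Fin.castAdd m k) + em) ^ ((1/2) : ℝ) : ℝ) : ℂ) = _
    rw [hcast_add k]
    exact congrArg _ (hrpow _ _ (hΛpos _) (hΛpos _))
  have hd2 : ∀ k : Fin m, dd (Fin.natAdd m k)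
      = ((Real.sqrt (Λ (Fin.castAdd m k) / Λ (Fin.natAdd m k)) : ℝ) : ℂ) := by
    intro k
    show ((Λ (Fin.natAdd m k) ^ (-(1/2) : ℝ)
      * Λ ((Fin.natAdd m k) + em) ^ ((1/2) : ℝ) : ℝ) : ℂ) = _
    rw [hnat_add k]
    exact congrArg _ (hrpow _ _ (hΛpos _) (hΛpos _))
  congr 1
  · exact Finset.prod_congr rfl fun k _ => by rw [hd1 k]
  · exact Finset.prod_congr rfl fun k _ => by rw [hd2 k]
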